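/- arXiv:2404.03614 — 5 statements merged into one kernel-verified Lean document; each statement's English description precedes it below -/
import Mathlib

section
/- Generic composition rule for forward simulations (rule comp): Assume the execution relation red is execution-composable. Suppose sim(R, R', S1, F1, γ, γ') and sim(R', R'', S2, F2, γ', γ'') hold, and suppose the success and failure predicates S : S_src → S_src → Prop and F : S_src → Prop satisfy: (i) for all τ, τ'', if S(τ, τ'') then there exists τ' with S1(τ, τ') and S2(τ', τ''); and (ii) for all τ, if F(τ) then F1(τ), or there exists τ' with S1(τ, τ') and F2(τ'). Then sim(R, R'', S, F, γ, γ'') holds. -/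
/-- Generic forward simulation judgement. -/
def Sim {S B P : Type*} (red : P → B → P → Option B → Prop)
    (Rin Rout : S → B → Prop) (Succ : S → S → Prop) (Fail : S → Prop)
    (γin γout : P) : Prop :=
  ∀ τ σ, Rin τ σ →
    ((∀ τ', Succ τ τ' → ∃ σ', red γin σ γout (some σ') ∧ Rout τ' σ') ∧
     (Fail τ → ∃ γ', red γin σ γ' none))

/-- The execution relation is execution-composable. -/
def ExecComposable {B P : Type*} (red : P → B → P → Option B → Prop) : Prop :=
  ∀ γ σ γ' σ' γ'' r, red γ σ γ' (some σ') → red γ' σ' γ'' r → red γ σ γ'' r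

/-- Rule comp: generic composition of forward simulations. -/
theorem comp_rule {S B P : Type*} (red : P → B → P → Option B → Prop)
    (hred : ExecComposable red)
    (R R' R'' : S → B → Prop) (S1 S2 : S → S → Prop) (F1 F2 : S → Prop)
    (γ γ' γ'' : P)
    (h1 : Sim red R R' S1 F1 γ γ')
    (h2 : Sim red R' R'' S2 F2 γ' γ'')
    (Sc : S → S → Prop) (Fc : S → Prop)
    (hS : ∀ τ τ'', Sc τ τ'' → ∃ τ', S1 τ τ' ∧ S2 τ' τ'')
    (hF : ∀ τ, Fc τ → F1 τ ∨ ∃ τ', S1 τ τ' ∧ F2 τ') :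
    Sim red R R'' Sc Fc γ γ'' := by
  intro τ σ hR
  constructor
  · intro τ'' hSc
    obtain ⟨τ', hS1, hS2⟩ := hS τ τ'' hSc
    obtain ⟨σ', hr1, hR'⟩ := (h1 τ σ hR).1 τ' hS1
    obtain ⟨σ'', hr2, hR''⟩ := (h2 τ' σ' hR').1 τ'' hS2
    exact ⟨σ'', hred _ _ _ _ _ _ hr1 hr2, hR''⟩
  · intro hFc
    rcases hF τ hFc with hF1 | ⟨τ', hS1, hF2⟩
    · exact (h1 τ σ hR).2 hF1
    · obtain ⟨σ', hr1, hR'⟩ := (h1 τ σ hR).1 τ' hS1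
      obtain ⟨γx, hr2⟩ := (h2 τ' σ' hR').2 hF2
      exact ⟨γx, hred _ _ _ _ _ _ hr1 hr2⟩
end

section
/- Boogie propagation rule (rule bprop): Assume the execution relation red is execution-composable. Define bSim(R, R', γ, γ') := sim(R, R', (fun τ τ' => τ = τ'), (fun _ => False), γ, γ'). If bSim(R, R1, γ, γ1), sim(R1, R2, S, F, γ1, γ2), and bSim(R2, R', γ2, γ') all hold, then sim(R, R', S, F, γ, γ') holds. -/
/-- Simulation in which the source state stays unchanged and no failure occurs. -/
def BSim {S B P : Type*} (red : P → B → P → Option B → Prop)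
    (R R' : S → B → Prop) (γ γ' : P) : Prop :=
  Sim red R R' (fun τ τ' => τ = τ') (fun _ => False) γ γ'

/-- Rule bprop: Boogie propagation rule. -/
theorem bprop_rule {S B P : Type*} (red : P → B → P → Option B → Prop)
    (hred : ExecComposable red)
    (R R1 R2 R' : S → B → Prop) (Sc : S → S → Prop) (Fc : S → Prop)
    (γ γ1 γ2 γ' : P)
    (h1 : BSim red R R1 γ γ1)
    (h2 : Sim red R1 R2 Sc Fc γ1 γ2)
    (h3 : BSim red R2 R' γ2 γ') :
    Sim red R R' Sc Fc γ γ' := by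
  intro τ σ hR
  obtain ⟨hs1, _⟩ := h1 τ σ hR
  obtain ⟨σ1, hred1, hR1⟩ := hs1 τ rfl
  obtain ⟨hs2, hf2⟩ := h2 τ σ1 hR1
  constructor
  · intro τ' hSc
    obtain ⟨σ2, hred2, hR2⟩ := hs2 τ' hSc
    obtain ⟨hs3, _⟩ := h3 τ' σ2 hR2
    obtain ⟨σ3, hred3, hR3⟩ := hs3 τ' rfl
    exact ⟨σ3, hred _ _ _ _ _ _ hred1 (hred _ _ _ _ _ _ hred2 hred3), hR3⟩
  · intro hF
    obtain ⟨γ'', h⟩ := hf2 hF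
    exact ⟨γ'', hred _ _ _ _ _ _ hred1 h⟩
end

section
/- Sequential composition rule (rule seq-sim): Assume the execution relation red is execution-composable. Let s1, s2 be statements and suppose the big-step semantics of their sequential composition seq s1 s2 satisfies: (a) if big (seq s1 s2) τ (some τ'') then there exists τ' with big s1 τ (some τ') and big s2 τ' (some τ''); and (b) if big (seq s1 s2) τ none then big s1 τ none, or there exists τ' with big s1 τ (some τ') and big s2 τ' none. If stmSim(R, R', s1, γ, γ') and stmSim(R', R'', s2, γ', γ'') hold, then stmSim(R, R'', seq s1 s2, γ, γ'') holds. -/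
/-- Forward simulation for source statements. -/
def StmSim {S B P Stmt : Type*} (red : P → B → P → Option B → Prop)
    (big : Stmt → S → Option S → Prop)
    (R R' : S → B → Prop) (s : Stmt) (γ γ' : P) : Prop :=
  Sim red R R' (fun τ τ' => big s τ (some τ')) (fun τ => big s τ none) γ γ'

/-- Rule seq-sim: sequential composition rule. -/
theorem seq_sim_rule {S B P Stmt : Type*} (red : P → B → P → Option B → Prop)
    (hred : ExecComposable red)
    (big : Stmt → S → Option S → Prop) (seq : Stmt → Stmt → Stmt)
    (s1 s2 : Stmt)
    (hbigS : ∀ τ τ'', big (seq s1 s2) τ (some τ'') →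
      ∃ τ', big s1 τ (some τ') ∧ big s2 τ' (some τ''))
    (hbigF : ∀ τ, big (seq s1 s2) τ none →
      big s1 τ none ∨ ∃ τ', big s1 τ (some τ') ∧ big s2 τ' none)
    (R R' R'' : S → B → Prop) (γ γ' γ'' : P)
    (h1 : StmSim red big R R' s1 γ γ')
    (h2 : StmSim red big R' R'' s2 γ' γ'') :
    StmSim red big R R'' (seq s1 s2) γ γ'' := by
  intro τ σ hR
  constructor
  · intro τ'' hbig
    obtain ⟨τ', h1s, h2s⟩ := hbigS τ τ'' hbig
    obtain ⟨σ', hr1, hR'⟩ := (h1 τ σ hR).1 τ' h1s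
    obtain ⟨σ'', hr2, hR''⟩ := (h2 τ' σ' hR').1 τ'' h2s
    exact ⟨σ'', hred _ _ _ _ _ _ hr1 hr2, hR''⟩
  · intro hf
    rcases hbigF τ hf with hf1 | ⟨τ', h1s, h2f⟩
    · exact (h1 τ σ hR).2 hf1
    · obtain ⟨σ', hr1, hR'⟩ := (h1 τ σ hR).1 τ' h1s
      obtain ⟨γf, hrf⟩ := (h2 τ' σ' hR').2 h2f
      exact ⟨γf, hred _ _ _ _ _ _ hr1 hrf⟩
end

section
/- Simulation rule for exhale (rule exh-sim): Assume the execution relation red is execution-composable. Let rc : V → V → Option V → Prop be an arbitrary remove-and-check reduction relation on Viper-style states (first argument: expression-evaluation state; second: reduction state; third: outcome), and define the exhale semantics by: exhale succeeds from σ to σ'' iff there exists σ' with rc σ σ (some σ') and nonDet(σ, σ', σ''), and exhale fails from σ iff rc σ σ none. Suppose: (premise 1) the forward simulation over pairs of Viper-style states sim(R1, R', S1, F1, γ, γ') holds, where R1((σ0, σ), σb) := σ0 = σ ∧ R(σ, σb), S1((σ0, σ), (σ1, σ')) := σ0 = σ1 ∧ rc σ0 σ (some σ'), and F1((σ0, σ))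 := rc σ0 σ none; and (premise 2) sim(R', R3, S2, (fun _ => False), γ', γ'') holds, where R3((σ0, σ), σb) := R''(σ, σb) and S2((σ0, σ), (τ, σ')) := nonDet(σ0, σ, σ') ∧ rc σ0 σ0 (some σ). Then the forward simulation over single Viper-style states sim(R, R'', exhSucc, exhFail, γ, γ'') holds, where exhSucc(σ, σ'') := ∃ σ', rc σ σ (some σ') ∧ nonDet(σ, σ', σ'') and exhFail(σ) := rc σ σ none. -/
/-- A Viper-style state: store, heap, and permission mask. -/
structure VState (Var Loc Val : Type*) where
  store : Var → Val
  heap : Loc → Val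
  mask : Loc → ℚ

/-- Nondeterministic heap assignment on locations without permission. -/
def nonDet {Var Loc Val : Type*} (σ σ' σ'' : VState Var Loc Val) : Prop :=
  σ''.store = σ'.store ∧ σ''.mask = σ'.mask ∧
  ∀ l, (σ.mask l = 0 ∨ σ'.mask l > 0) → σ''.heap l = σ'.heap l

/-- Rule exh-sim: simulation rule for exhale. -/
theorem exh_sim_rule {Var Loc Val B P : Type*}
    (red : P → B → P → Option B → Prop)
    (hred : ExecComposable red)
    (rc : VState Var Loc Val → VState Var Loc Val → Option (VState Var Loc Val) → Prop)
    (R R'' : VState Var Loc Val → B → Prop)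
    (R' : VState Var Loc Val × VState Var Loc Val → B → Prop)
    (γ γ' γ'' : P)
    (h1 : Sim red
      (fun (p : VState Var Loc Val × VState Var Loc Val) σb =>
        p.1 = p.2 ∧ R p.2 σb)
      R'
      (fun p q => p.1 = q.1 ∧ rc p.1 p.2 (some q.2))
      (fun p => rc p.1 p.2 none)
      γ γ')
    (h2 : Sim red
      R'
      (fun (p : VState Var Loc Val × VState Var Loc Val) σb => R'' p.2 σb)
      (fun p q => nonDet p.1 p.2 q.2 ∧ rc p.1 p.1 (some p.2))
      (fun _ => False)
      γ' γ'') :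
    Sim red R R''
      (fun σ σ'' => ∃ σ', rc σ σ (some σ') ∧ nonDet σ σ' σ'')
      (fun σ => rc σ σ none)
      γ γ'' := by
  intro τ σ hR
  obtain ⟨hS1, hF1⟩ := h1 (τ, τ) σ ⟨rfl, hR⟩
  constructor
  · rintro σ'' ⟨σ', hrc, hnd⟩
    obtain ⟨σb, hred1, hR'⟩ := hS1 (τ, σ') ⟨rfl, hrc⟩
    obtain ⟨hS2, -⟩ := h2 (τ, σ') σb hR'
    obtain ⟨σb', hred2, hR''⟩ := hS2 (τ, σ'') ⟨hnd, hrc⟩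
    exact ⟨σb', hred _ _ _ _ _ _ hred1 hred2, hR''⟩
  · exact hF1
end

section
/- Separating-conjunction rule with an assertion predicate (rule rsep-sim): Assume the execution relation red is execution-composable. Let Assn be a type of assertions with a binary operation * and a reduction relation rc : Assn → V → V → Option V → Prop on Viper-style states. Fix assertions A1, A2 and suppose rc satisfies the forward decomposition properties: (a) if rc (A1 * A2) σ0 σ (some σ'') then there exists σ' with rc A1 σ0 σ (some σ') and rc A2 σ0 σ' (some σ''); and (b) if rc (A1 * A2) σ0 σ none then rc A1 σ0 σ none, or there exists σ' with rc A1 σ0 σ (some σ') and rc A2 σ0 σ' none. Let Q : Assn → (V × V) → Prop and define rcSimQ(Q, R, R', A, γ, γ') := sim over pairs of Viper-style states with input relation (fun (σ0, σ) σb => R((σ0, σ), σb) ∧ Q(A, (σ0, σ))), output relation R', success predicate (fun (σ0, σ) (σ1, σ') => σ0 = σ1 ∧ rc A σ0 σ (some σ')), and failure predicate (fun (σ0, σ) => rc A σ0 σ none), from γ to γ'. Suppose rcSimQ(Q, R, R', A1, γ, γ') and rcSimQ(Q, R', R'', A2, γ', γ'') hold, and suppose for all σ0, σ: Q(A1 *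 A2, (σ0, σ)) implies both Q(A1, (σ0, σ)) and, for all σ' with rc A1 σ0 σ (some σ'), Q(A2, (σ0, σ')). Then rcSimQ(Q, R, R'', A1 * A2, γ, γ'') holds. -/
/-- Simulation for the remove-and-check phase of exhaling assertion `A`,
specialised with an assertion predicate `Q`. -/
def RcSimQ {Var Loc Val B P Assn : Type*}
    (red : P → B → P → Option B → Prop)
    (rc : Assn → VState Var Loc Val → VState Var Loc Val →
      Option (VState Var Loc Val) → Prop)
    (Q : Assn → VState Var Loc Val × VState Var Loc Val → Prop)
    (R R' : VState Var Loc Val × VState Var Loc Val → B → Prop)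
    (A : Assn) (γ γ' : P) : Prop :=
  Sim red
    (fun p σb => R p σb ∧ Q A p)
    R'
    (fun p q => p.1 = q.1 ∧ rc A p.1 p.2 (some q.2))
    (fun p => rc A p.1 p.2 none)
    γ γ'

/-- Rule rsep-sim: separating-conjunction rule with an assertion predicate. -/
theorem rsep_sim_rule {Var Loc Val B P Assn : Type*}
    (red : P → B → P → Option B → Prop)
    (hred : ExecComposable red)
    (star : Assn → Assn → Assn)
    (rc : Assn → VState Var Loc Val → VState Var Loc Val →
      Option (VState Var Loc Val) → Prop)
    (A1 A2 : Assn)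
    (hrcS : ∀ σ0 σ σ'', rc (star A1 A2) σ0 σ (some σ'') →
      ∃ σ', rc A1 σ0 σ (some σ') ∧ rc A2 σ0 σ' (some σ''))
    (hrcF : ∀ σ0 σ, rc (star A1 A2) σ0 σ none →
      rc A1 σ0 σ none ∨ ∃ σ', rc A1 σ0 σ (some σ') ∧ rc A2 σ0 σ' none)
    (Q : Assn → VState Var Loc Val × VState Var Loc Val → Prop)
    (R R' R'' : VState Var Loc Val × VState Var Loc Val → B → Prop)
    (γ γ' γ'' : P)
    (h1 : RcSimQ red rc Q R R' A1 γ γ')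
    (h2 : RcSimQ red rc Q R' R'' A2 γ' γ'')
    (hQ : ∀ σ0 σ, Q (star A1 A2) (σ0, σ) →
      Q A1 (σ0, σ) ∧ ∀ σ', rc A1 σ0 σ (some σ') → Q A2 (σ0, σ')) :
    RcSimQ red rc Q R R'' (star A1 A2) γ γ'' := by
  rintro ⟨σ0, σ⟩ σb ⟨hR, hQstar⟩
  obtain ⟨hQ1, hQ2⟩ := hQ σ0 σ hQstar
  obtain ⟨hS1, hF1⟩ := h1 (σ0, σ) σb ⟨hR, hQ1⟩
  constructor
  · rintro ⟨σ1, σ''⟩ ⟨heq, hrc⟩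
    cases heq
    obtain ⟨σ', hrc1, hrc2⟩ := hrcS σ0 σ σ'' hrc
    obtain ⟨σb', hred1, hR'⟩ := hS1 (σ0, σ') ⟨rfl, hrc1⟩
    obtain ⟨hS2, _⟩ := h2 (σ0, σ') σb' ⟨hR', hQ2 σ' hrc1⟩
    obtain ⟨σb'', hred2, hR''⟩ := hS2 (σ0, σ'') ⟨rfl, hrc2⟩
    exact ⟨σb'', hred γ σb γ' σb' γ'' _ hred1 hred2, hR''⟩
  · intro hFail
    rcases hrcF σ0 σ hFail with h | ⟨σ', hrc1, hrc2⟩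
    · exact hF1 h
    · obtain ⟨σb', hred1, hR'⟩ := hS1 (σ0, σ') ⟨rfl, hrc1⟩
      obtain ⟨_, hF2⟩ := h2 (σ0, σ') σb' ⟨hR', hQ2 σ' hrc1⟩
      obtain ⟨g, hred2⟩ := hF2 hrc2
      exact ⟨g, hred γ σb γ' σb' g _ hred1 hred2⟩
end
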